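/- Let k be a nonzero integer, let i ≥ 2, and let σ̂_i^{(k)} ∈ Aut(F_n) be the automorphism taking x_i to x_i^k x_{i+1} x_i^{−k}, x_{i+1} to x_i, and fixing all other free generators. If w ∈ F_n has reduced word of the form x_1^k u x_1^{−k}, where u is a nonempty reduced word that neither begins nor ends with a letter x_1^{±1}, then the reduced word of σ̂_i^{(k)}(w) is of the same form x_1^k u' x_1^{−k}, where u' is a nonempty reduced word that neither begins nor ends with a letter x_1^{±1}. -/

import Mathlib

set_option linter.unusedSectionVars false
namespace WadaAux

open FreeGroup List

variable {α : Type*} [DecidableEq α]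

/-- Adjacent letters that do not cancel. -/
def Rel : (α × Bool) → (α × Bool) → Prop := fun p q => p.1 = q.1 → p.2 = q.2

theorem chain'_reduce (L : List (α × Bool)) : (FreeGroup.reduce L).Chain' Rel := by
  induction L with
  | nil => exact List.isChain_nil
  | cons p L ih =>
    rw [FreeGroup.reduce.cons]
    rcases h : FreeGroup.reduce L with _ | ⟨q, L'⟩
    · exact List.isChain_singleton _
    · rw [h] at ih
      dsimp only
      split_ifs with hc
      · exact ih.tail
      · refine List.isChain_cons_cons.mpr ⟨?_, ih⟩
        intro h1
        by_contra h2
        exact hc ⟨h1, by cases hp : p.2 <;> cases hq : q.2 <;> simp_all⟩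

theorem chain'_toWord (g : FreeGroup α) : g.toWord.Chain' Rel := by
  rw [← FreeGroup.reduce_toWord]
  exact chain'_reduce _

theorem reduce_eq_self_of_chain' {L : List (α × Bool)} (h : L.Chain' Rel) :
    FreeGroup.reduce L = L := by
  induction L with
  | nil => rfl
  | cons p L ih =>
    rw [FreeGroup.reduce.cons, ih h.tail]
    cases L with
    | nil => rfl
    | cons q L' =>
      dsimp only
      rw [if_neg]
      rintro ⟨h1, h2⟩
      have h3 := (List.isChain_cons_cons.mp h).1 h1
      rw [h3] at h2
      simp at h2

/-- `g` has no letter with index `x0` in its reduced word. -/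
def NoL (x0 : α) (g : FreeGroup α) : Prop := ∀ p ∈ g.toWord, p.1 ≠ x0

theorem NoL.mul {x0 : α} {g h : FreeGroup α} (hg : NoL x0 g) (hh : NoL x0 h) :
    NoL x0 (g * h) := by
  intro p hp
  rcases List.mem_append.mp ((FreeGroup.toWord_mul_sublist g h).subset hp) with h' | h'
  exacts [hg p h', hh p h']

theorem NoL.one {x0 : α} : NoL x0 (1 : FreeGroup α) := by
  intro p hp; simp at hp

theorem NoL.inv {x0 : α} {g : FreeGroup α} (hg : NoL x0 g) : NoL x0 g⁻¹ := by
  intro p hp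
  rw [FreeGroup.toWord_inv, FreeGroup.invRev, List.mem_reverse, List.mem_map] at hp
  obtain ⟨q, hq, rfl⟩ := hp
  exact hg q hq

theorem NoL.pow {x0 : α} {g : FreeGroup α} (hg : NoL x0 g) (m : ℕ) : NoL x0 (g ^ m) := by
  induction m with
  | zero => simpa using NoL.one
  | succ m ih => rw [pow_succ]; exact ih.mul hg

theorem NoL.zpow {x0 : α} {g : FreeGroup α} (hg : NoL x0 g) (m : ℤ) : NoL x0 (g ^ m) := by
  rcases m with m | m
  · rw [Int.ofNat_eq_coe, zpow_natCast]; exact hg.pow m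
  · rw [zpow_negSucc]; exact (hg.pow (m + 1)).inv

theorem NoL.of {x0 a : α} (h : a ≠ x0) : NoL x0 (FreeGroup.of a) := by
  intro p hp
  rw [FreeGroup.toWord_of] at hp
  simp at hp
  rw [hp]
  exact h

theorem mk_cons (p : α × Bool) (L : List (α × Bool)) :
    FreeGroup.mk (p :: L) = FreeGroup.mk [p] * FreeGroup.mk L := by
  rw [FreeGroup.mul_mk]; rfl

theorem mk_single_true (a : α) : FreeGroup.mk [(a, true)] = FreeGroup.of a := rfl

theorem mk_single_false (a : α) : FreeGroup.mk [(a, false)] = (FreeGroup.of a)⁻¹ := by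
  rw [FreeGroup.of, FreeGroup.inv_mk]; rfl

theorem NoL_mk_of_letters {x0 : α} (φ : FreeGroup α →* FreeGroup α)
    (hH : ∀ a, a ≠ x0 → NoL x0 (φ (FreeGroup.of a))) :
    ∀ L : List (α × Bool), (∀ p ∈ L, p.1 ≠ x0) → NoL x0 (φ (FreeGroup.mk L)) := by
  intro L
  induction L with
  | nil =>
    intro _
    have : FreeGroup.mk ([] : List (α × Bool)) = 1 := rfl
    rw [this, _root_.map_one]; exact NoL.one
  | cons p L ih =>
    intro hmem
    rw [mk_cons, _root_.map_mul]
    refine NoL.mul ?_ (ih fun q hq => hmem q (List.mem_cons_of_mem _ hq))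
    have hp1 : p.1 ≠ x0 := hmem p List.mem_cons_self
    rcases p with ⟨a, b⟩
    cases b
    · rw [mk_single_false, _root_.map_inv]; exact (hH a hp1).inv
    · rw [mk_single_true]; exact hH a hp1

theorem fix_mk_x0 {x0 : α} (φ : FreeGroup α →* FreeGroup α)
    (hfix : φ (FreeGroup.of x0) = FreeGroup.of x0) :
    ∀ L : List (α × Bool), (∀ p ∈ L, p.1 = x0) → φ (FreeGroup.mk L) = FreeGroup.mk L := by
  intro L
  induction L with
  | nil =>
    intro _
    have : FreeGroup.mk ([] : List (α × Bool)) = 1 := rfl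
    rw [this, _root_.map_one]
  | cons p L ih =>
    intro hmem
    rw [mk_cons, _root_.map_mul, ih fun q hq => hmem q (List.mem_cons_of_mem _ hq)]
    congr 1
    have hp1 : p.1 = x0 := hmem p List.mem_cons_self
    rcases p with ⟨a, b⟩
    dsimp at hp1
    subst hp1
    cases b
    · rw [mk_single_false, _root_.map_inv, hfix]
    · rw [mk_single_true, hfix]

theorem head?_dropWhile_false (p : α × Bool → Bool) (l : List (α × Bool)) :
    ∀ x ∈ (l.dropWhile p).head?, p x = false := by
  intro x hx
  have h := List.head?_dropWhile_not p l
  cases h2 : (l.dropWhile p).head? with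
  | none => rw [h2] at hx; simp at hx
  | some y =>
    rw [h2] at h hx
    simp only [Option.mem_some_iff] at hx
    subst hx
    exact h

theorem core (x0 : α) (φ : FreeGroup α →* FreeGroup α) (hinj : Function.Injective φ)
    (hfix : φ (FreeGroup.of x0) = FreeGroup.of x0)
    (hH : ∀ a, a ≠ x0 → NoL x0 (φ (FreeGroup.of a))) :
    ∀ N : ℕ, ∀ L : List (α × Bool), L.length ≤ N → FreeGroup.reduce L = L → L ≠ [] →
      (∀ p ∈ L.head?, p.1 ≠ x0) → (∀ p ∈ L.getLast?, p.1 ≠ x0) →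
      (φ (FreeGroup.mk L)).toWord ≠ [] ∧
      (∀ p ∈ (φ (FreeGroup.mk L)).toWord.head?, p.1 ≠ x0) ∧
      (∀ p ∈ (φ (FreeGroup.mk L)).toWord.getLast?, p.1 ≠ x0) := by
  intro N
  induction N with
  | zero =>
    intro L hlen _ hne _ _
    exact absurd (List.length_eq_zero_iff.mp (Nat.le_zero.mp hlen)) hne
  | succ N IH =>
    intro L hlen hred hne hhead hlast
    classical
    set d : (α × Bool) → Bool := fun p => decide (p.1 = x0) with hd
    set A := L.takeWhile (fun p => !(d p)) with hA
    set B := L.dropWhile (fun p => !(d p)) with hB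
    have hAB : A ++ B = L := List.takeWhile_append_dropWhile
    have memA : ∀ p ∈ A, p.1 ≠ x0 := by
      intro p hp
      have := List.mem_takeWhile_imp hp
      simpa [hd] using this
    have chainL : L.Chain' Rel := by rw [← hred]; exact chain'_reduce L
    by_cases hBnil : B = []
    · -- L has no x0 at all
      have hLA : L = A := by rw [← hAB, hBnil, List.append_nil]
      have memL : ∀ p ∈ L, p.1 ≠ x0 := by rw [hLA]; exact memA
      have hNo : NoL x0 (φ (FreeGroup.mk L)) := NoL_mk_of_letters φ hH L memL
      have hmkne : FreeGroup.mk L ≠ 1 := by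
        intro h
        have : (FreeGroup.mk L).toWord = [] := by rw [h]; simp
        rw [FreeGroup.toWord_mk, hred] at this
        exact hne this
      have hφne : φ (FreeGroup.mk L) ≠ 1 := fun h => hmkne (hinj (by rw [h, _root_.map_one]))
      refine ⟨by simpa [FreeGroup.toWord_eq_nil_iff] using hφne, ?_, ?_⟩
      · intro p hp; exact hNo p (List.mem_of_mem_head? hp)
      · intro p hp; exact hNo p (List.mem_of_mem_getLast? hp)
    · -- B starts with x0-letters
      have hBhead? : ∀ x ∈ B.head?, x.1 = x0 := by
        intro x hx
        have := head?_dropWhile_false (fun p => !(d p)) L x hx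
        simpa [hd] using this
      obtain ⟨hdB, t, hBt⟩ := List.exists_cons_of_ne_nil hBnil
      have hdBx0 : hdB.1 = x0 := hBhead? hdB (by rw [hBt]; rfl)
      have hAnil : A ≠ [] := by
        intro h
        have hLB : L = B := by rw [← hAB, h, List.nil_append]
        exact hhead hdB (by rw [hLB, hBt]; rfl) hdBx0
      set C := B.takeWhile d with hC
      set D := B.dropWhile d with hD
      have hCD : C ++ D = B := List.takeWhile_append_dropWhile
      have memC : ∀ p ∈ C, p.1 = x0 := by
        intro p hp
        have := List.mem_takeWhile_imp hp
        simpa [hd] using this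
      have hCnil : C ≠ [] := by
        rw [hC, hBt, List.takeWhile_cons_of_pos (by simpa [hd] using hdBx0)]
        simp
      have hgetLB : L.getLast? = B.getLast? := by
        rw [← hAB]; exact List.getLast?_append_of_ne_nil _ hBnil
      have hDnil : D ≠ [] := by
        intro h
        have hBC : B = C := by rw [← hCD, h, List.append_nil]
        have hlB : B.getLast hBnil ∈ C := by rw [← hBC]; exact List.getLast_mem _
        have : (B.getLast hBnil).1 ≠ x0 := by
          apply hlast
          rw [hgetLB]
          exact (List.getLast?_eq_getLast hBnil).symm ▸ rfl
        exact this (memC _ hlB)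
      have hLdec : A ++ (C ++ D) = L := by rw [hCD, hAB]
      -- chains
      have chainB : B.Chain' Rel := chainL.suffix (List.dropWhile_suffix _)
      have chainA : A.Chain' Rel := chainL.prefix (List.takeWhile_prefix _)
      have chainD : D.Chain' Rel := chainB.suffix (List.dropWhile_suffix _)
      -- IH on D
      have hlenD : D.length ≤ N := by
        have h1 : A.length + (C.length + D.length) = L.length := by
          rw [← hLdec]; simp
        have h2 : 1 ≤ A.length := List.length_pos_iff.mpr hAnil
        have h3 : 1 ≤ C.length := List.length_pos_iff.mpr hCnil
        omega
      have hDhead : ∀ p ∈ D.head?, p.1 ≠ x0 := by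
        intro p hp
        have := head?_dropWhile_false d B p hp
        simpa [hd] using this
      have hgetLD : L.getLast? = D.getLast? := by
        rw [hgetLB, ← hCD]
        exact List.getLast?_append_of_ne_nil _ hDnil
      have hDlast : ∀ p ∈ D.getLast?, p.1 ≠ x0 := by
        intro p hp; exact hlast p (by rw [hgetLD]; exact hp)
      obtain ⟨hR1, hR2, hR3⟩ :=
        IH D hlenD (reduce_eq_self_of_chain' chainD) hDnil hDhead hDlast
      -- the three blocks
      set P := (φ (FreeGroup.mk A)).toWord with hP
      set Rl := (φ (FreeGroup.mk D)).toWord with hRl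
      have hPno : ∀ p ∈ P, p.1 ≠ x0 := NoL_mk_of_letters φ hH A memA
      have hPnil : P ≠ [] := by
        have hmkAne : FreeGroup.mk A ≠ 1 := by
          intro h
          have : (FreeGroup.mk A).toWord = [] := by rw [h]; simp
          rw [FreeGroup.toWord_mk, reduce_eq_self_of_chain' chainA] at this
          exact hAnil this
        have : φ (FreeGroup.mk A) ≠ 1 := fun h => hmkAne (hinj (by rw [h, _root_.map_one]))
        simpa [hP, FreeGroup.toWord_eq_nil_iff] using this
      have chainP : P.Chain' Rel := chain'_toWord _
      have chainRl : Rl.Chain' Rel := chain'_toWord _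
      have chainC : C.Chain' Rel := chainB.prefix (List.takeWhile_prefix _)
      -- junctions
      have junc2 : ∀ x ∈ C.getLast?, ∀ y ∈ Rl.head?, Rel x y := by
        intro x hx y hy h1
        exact absurd (h1 ▸ memC x (List.mem_of_mem_getLast? hx)) (hR2 y hy)
      have junc1 : ∀ x ∈ P.getLast?, ∀ y ∈ (C ++ Rl).head?, Rel x y := by
        intro x hx y hy h1
        have hyC : y ∈ C.head? := by
          rw [List.head?_append_of_ne_nil _ hCnil] at hy; exact hy
        have : y.1 = x0 := memC y (List.mem_of_mem_head? hyC)
        exact absurd (h1.trans this) (hPno x (List.mem_of_mem_getLast? hx))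
      have chainAll : (P ++ (C ++ Rl)).Chain' Rel :=
        chainP.append (chainC.append chainRl junc2) junc1
      -- the image equals mk of the concatenation
      have hkey : φ (FreeGroup.mk L) = FreeGroup.mk (P ++ (C ++ Rl)) := by
        have h1 : FreeGroup.mk L =
            FreeGroup.mk A * (FreeGroup.mk C * FreeGroup.mk D) := by
          rw [FreeGroup.mul_mk, FreeGroup.mul_mk, hLdec]
        rw [h1, _root_.map_mul, _root_.map_mul, fix_mk_x0 φ hfix C memC]
        rw [← FreeGroup.mk_toWord (x := φ (FreeGroup.mk A)),
          ← FreeGroup.mk_toWord (x := φ (FreeGroup.mk D))]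
        rw [← hP, ← hRl, FreeGroup.mul_mk, FreeGroup.mul_mk]
      have htw : (φ (FreeGroup.mk L)).toWord = P ++ (C ++ Rl) := by
        rw [hkey, FreeGroup.toWord_mk, reduce_eq_self_of_chain' chainAll]
      rw [htw]
      refine ⟨by simp [hPnil], ?_, ?_⟩
      · intro p hp
        rw [List.head?_append_of_ne_nil _ hPnil] at hp
        exact hPno p (List.mem_of_mem_head? hp)
      · intro p hp
        rw [List.getLast?_append_of_ne_nil _ (l₂ := C ++ Rl) (by simp [hR1]),
          List.getLast?_append_of_ne_nil _ hR1] at hp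
        exact hR3 p hp

end WadaAux


/-- Let `k ≠ 0`, let `i ≥ 2` (with `x_i, x_{i+1}` among the generators,
`1`-indexed), and let `σ̂_i^{(k)} ∈ Aut(F_n)` be the automorphism with
`x_i ↦ x_i^k x_{i+1} x_i^{-k}`, `x_{i+1} ↦ x_i`, fixing all other free generators.
If `w ∈ F_n` has reduced word of the form `x_1^k u x_1^{-k}` with `u` a nonempty
reduced word neither beginning nor ending with a letter `x_1^{±1}`, then the reduced
word of `σ̂_i^{(k)}(w)` has the same form `x_1^k u' x_1^{-k}`. -/
theorem wada_type1_sigmaihat_preserves_form (n : ℕ) (hn : 3 ≤ n) (k : ℤ) (hk : k ≠ 0)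
    (i : ℕ) (hi : 2 ≤ i) (hin : i < n)
    (φ : MulAut (FreeGroup (Fin n)))
    (hφ1 : φ (FreeGroup.of (⟨i - 1, by omega⟩ : Fin n)) =
      FreeGroup.of (⟨i - 1, by omega⟩ : Fin n) ^ k * FreeGroup.of (⟨i, hin⟩ : Fin n) *
        FreeGroup.of (⟨i - 1, by omega⟩ : Fin n) ^ (-k))
    (hφ2 : φ (FreeGroup.of (⟨i, hin⟩ : Fin n)) = FreeGroup.of (⟨i - 1, by omega⟩ : Fin n))
    (hφ3 : ∀ j : Fin n, j ≠ ⟨i - 1, by omega⟩ → j ≠ ⟨i, hin⟩ →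
      φ (FreeGroup.of j) = FreeGroup.of j)
    (w u : FreeGroup (Fin n)) (hu : u ≠ 1)
    (huhead : ∀ p ∈ u.toWord.head?, p.1 ≠ (⟨0, by omega⟩ : Fin n))
    (hulast : ∀ p ∈ u.toWord.getLast?, p.1 ≠ (⟨0, by omega⟩ : Fin n))
    (hw : w = FreeGroup.of (⟨0, by omega⟩ : Fin n) ^ k * u *
      FreeGroup.of (⟨0, by omega⟩ : Fin n) ^ (-k)) :
    ∃ u' : FreeGroup (Fin n), u' ≠ 1 ∧
      (∀ p ∈ u'.toWord.head?, p.1 ≠ (⟨0, by omega⟩ : Fin n)) ∧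
      (∀ p ∈ u'.toWord.getLast?, p.1 ≠ (⟨0, by omega⟩ : Fin n)) ∧
      φ w = FreeGroup.of (⟨0, by omega⟩ : Fin n) ^ k * u' *
        FreeGroup.of (⟨0, by omega⟩ : Fin n) ^ (-k) := by
  set x0 : Fin n := ⟨0, by omega⟩ with hx0
  have h0a : x0 ≠ (⟨i - 1, by omega⟩ : Fin n) := by
    simp only [hx0, ne_eq, Fin.mk.injEq]; omega
  have h0b : x0 ≠ (⟨i, hin⟩ : Fin n) := by
    simp only [hx0, ne_eq, Fin.mk.injEq]; omega
  have hfix : φ.toMonoidHom (FreeGroup.of x0) = FreeGroup.of x0 := hφ3 x0 h0a h0b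
  have hH : ∀ a : Fin n, a ≠ x0 → WadaAux.NoL x0 (φ.toMonoidHom (FreeGroup.of a)) := by
    intro a ha
    by_cases h1 : a = (⟨i - 1, by omega⟩ : Fin n)
    · subst h1
      show WadaAux.NoL x0 (φ (FreeGroup.of _))
      rw [hφ1]
      exact (((WadaAux.NoL.of (Ne.symm h0a)).zpow k).mul
        (WadaAux.NoL.of (Ne.symm h0b))).mul ((WadaAux.NoL.of (Ne.symm h0a)).zpow (-k))
    · by_cases h2 : a = (⟨i, hin⟩ : Fin n)
      · subst h2
        show WadaAux.NoL x0 (φ (FreeGroup.of _))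
        rw [hφ2]
        exact WadaAux.NoL.of (Ne.symm h0a)
      · show WadaAux.NoL x0 (φ (FreeGroup.of a))
        rw [hφ3 a h1 h2]
        exact WadaAux.NoL.of ha
  have huW : u.toWord ≠ [] := by simpa [FreeGroup.toWord_eq_nil_iff] using hu
  obtain ⟨h1, h2, h3⟩ := WadaAux.core x0 φ.toMonoidHom φ.injective hfix hH
    u.toWord.length u.toWord le_rfl (FreeGroup.reduce_toWord u) huW huhead hulast
  rw [FreeGroup.mk_toWord] at h1 h2 h3
  refine ⟨φ u, ?_, h2, h3, ?_⟩
  · intro h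
    exact h1 (by rw [show φ.toMonoidHom u = φ u from rfl, h]; simp)
  · rw [hw, map_mul, map_mul, map_zpow, map_zpow, hφ3 x0 h0a h0b]
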